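/- With the setup of the marking rule, the digraph D' obtained from D by deleting all marked edges has no isolated vertices: every vertex of V is incident (as head or tail) to at least one unmarked edge, provided every vertex of D is incident to at least one edge (which holds automatically since every vertex has outdegree 1) and provided that whenever a vertex x has indegree 0 in D its outgoing edge is unmarked by convention. Precisely: for every vertex v, either the edge (v, h(v)) is unmarked, or there exists a vertex u with h(u) = v and the edge (u, v) unmarked. -/
import Mathlib

/-- With the marking rule (an edge `(x, h x)` is marked iff `x` has positive
indegree, `ξ (h x) > ξ x` and `ξ (h x) > ξ (h (h x))`), the digraph obtained by
deleting all marked edges has no isolated vertices: every vertex is the head or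
the tail of some unmarked edge. -/
theorem stmt_4 {V : Type*} (h : V → V) (hne : ∀ x, h x ≠ x)
    (ξ : V → ℝ) (hξ : Function.Injective ξ)
    (marked : V → Prop)
    (hmarked : ∀ x, marked x ↔
      (∃ u, h u = x) ∧ ξ (h x) > ξ x ∧ ξ (h x) > ξ (h (h x))) :
    ∀ v : V, ¬ marked v ∨ ∃ u, h u = v ∧ ¬ marked u := by
  intro v
  by_cases hv : marked v
  · right
    obtain ⟨⟨u, hu⟩, h1, h2⟩ := (hmarked v).mp hv
    refine ⟨u, hu, fun hmu => ?_⟩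
    obtain ⟨-, h3, h4⟩ := (hmarked u).mp hmu
    rw [hu] at h3 h4
    linarith
  · exact Or.inl hv
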